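/- Let p be a probability measure on ℝ with mean 0, a > 0, and q⁺ the measure with dq⁺/dp(x) = 1 + min(1, max(−1, ax)). Then the extended squared Hellinger distance satisfies H²(p, q⁺) ≤ (1/2) ∫ min(1, (ax)²) dp = (a/2)(∫_{(−∞,−1/a]} (1/a) dp + a∫_{[−1/a,1/a]} x² dp + ∫_{[1/a,∞)} (1/a) dp) ≤ (a/2)(∫_{(−∞,−1/a]} (−x) dp + a∫_{[−1/a,1/a]} x² dp + ∫_{[1/a,∞)} x dp). -/

import Mathlib

open MeasureTheory

/-- The extended squared Hellinger distance between a (atomless) mean-zero probability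
measure `p` and the tilted measure `q⁺` with density `1 + min 1 (max (-1) (a x))` is at most
`(1/2) ∫ min(1,(ax)²) dp`, which equals and is bounded by the displayed tail/central
integrals. -/
theorem hellinger_tilted_bound (p : Measure ℝ) [IsProbabilityMeasure p]
    (hcont : ∀ x : ℝ, p {x} = 0)
    (hint : Integrable (fun x => x) p) (hmean : ∫ x, x ∂p = 0)
    (a : ℝ) (ha : 0 < a) :
    (1 / 2) * ∫ x, (1 - Real.sqrt (1 + min 1 (max (-1) (a * x)))) ^ 2 ∂p
        ≤ (1 / 2) * ∫ x, min 1 ((a * x) ^ 2) ∂p ∧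
    (1 / 2) * ∫ x, min 1 ((a * x) ^ 2) ∂p
        = (a / 2) * ((∫ x in Set.Iic (-(1 / a)), (1 / a) ∂p)
            + a * (∫ x in Set.Icc (-(1 / a)) (1 / a), x ^ 2 ∂p)
            + ∫ x in Set.Ici (1 / a), (1 / a) ∂p) ∧
    (a / 2) * ((∫ x in Set.Iic (-(1 / a)), (1 / a) ∂p)
            + a * (∫ x in Set.Icc (-(1 / a)) (1 / a), x ^ 2 ∂p)
            + ∫ x in Set.Ici (1 / a), (1 / a) ∂p)
        ≤ (a / 2) * ((∫ x in Set.Iic (-(1 / a)), (-x) ∂p)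
            + a * (∫ x in Set.Icc (-(1 / a)) (1 / a), x ^ 2 ∂p)
            + ∫ x in Set.Ici (1 / a), x ∂p) := by
  haveI : NullSingletonClass p := ⟨hcont⟩
  have ha0 : a ≠ 0 := ne_of_gt ha
  set c : ℝ := 1 / a with hc
  have hc0 : 0 < c := by positivity
  have hca : a * c = 1 := mul_one_div_cancel ha0
  have hcc : -c ≤ c := by linarith
  -- integrability of the bounding function
  have hgmeas : Measurable (fun x : ℝ => min 1 ((a * x) ^ 2)) :=
    measurable_const.min ((measurable_const.mul measurable_id).pow measurable_const)
  have hg_int : Integrable (fun x : ℝ => min 1 ((a * x) ^ 2)) p := by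
    refine (integrable_const (1 : ℝ)).mono' hgmeas.aestronglyMeasurable ?_
    filter_upwards with x
    rw [Real.norm_eq_abs, abs_of_nonneg (le_min zero_le_one (sq_nonneg _))]
    exact min_le_left _ _
  refine ⟨?_, ?_, ?_⟩
  · -- pointwise bound and monotonicity
    apply mul_le_mul_of_nonneg_left _ (by norm_num)
    refine integral_mono_of_nonneg (Filter.Eventually.of_forall fun x => ?_) hg_int
      (Filter.Eventually.of_forall fun x => ?_)
    · positivity
    · show (1 - Real.sqrt (1 + min 1 (max (-1) (a * x)))) ^ 2 ≤ min 1 ((a * x) ^ 2)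
      set y := a * x with hy
      set t := min 1 (max (-1) y) with htdef
      have ht1 : -1 ≤ t := le_min (by norm_num) (le_max_left _ _)
      have ht2 : t ≤ 1 := min_le_left _ _
      have h0 : (0 : ℝ) ≤ 1 + t := by linarith
      have hs0 : 0 ≤ Real.sqrt (1 + t) := Real.sqrt_nonneg _
      have hs : Real.sqrt (1 + t) ^ 2 = 1 + t := Real.sq_sqrt h0
      have hq1 : (1 - Real.sqrt (1 + t)) ^ 2 ≤ t ^ 2 := by
        nlinarith [sq_nonneg (1 - Real.sqrt (1 + t)),
          mul_nonneg (sq_nonneg (1 - Real.sqrt (1 + t))) hs0,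
          mul_nonneg (sq_nonneg (1 - Real.sqrt (1 + t))) (sq_nonneg (Real.sqrt (1 + t)))]
      have hty : t ^ 2 ≤ min 1 (y ^ 2) := by
        rcases le_total y (-1) with h | h
        · have : t = -1 := by rw [htdef, max_eq_left h, min_eq_right (by norm_num)]
          rw [this]; exact le_min (by norm_num) (by nlinarith)
        rcases le_total 1 y with h' | h'
        · have : t = 1 := by rw [htdef, max_eq_right (by linarith), min_eq_left h']
          rw [this]; exact le_min (by norm_num) (by nlinarith)
        · have : t = y := by rw [htdef, max_eq_right h, min_eq_right h']
          rw [this]; exact le_min (by nlinarith) le_rfl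
      exact hq1.trans hty
  · -- equality of the two expressions
    have split1 : ∫ x, min 1 ((a * x) ^ 2) ∂p
        = (∫ x in Set.Iic (-c), min 1 ((a * x) ^ 2) ∂p)
          + ∫ x in Set.Ioi (-c), min 1 ((a * x) ^ 2) ∂p :=
      (intervalIntegral.integral_Iic_add_Ioi hg_int.integrableOn hg_int.integrableOn).symm
    have hdisj : Disjoint (Set.Ioc (-c) c) (Set.Ioi c) := by
      rw [Set.disjoint_left]
      rintro x ⟨_, hx⟩ hx'
      exact absurd hx' (not_lt.2 hx)
    have split2 : ∫ x in Set.Ioi (-c), min 1 ((a * x) ^ 2) ∂p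
        = (∫ x in Set.Ioc (-c) c, min 1 ((a * x) ^ 2) ∂p)
          + ∫ x in Set.Ioi c, min 1 ((a * x) ^ 2) ∂p := by
      rw [← setIntegral_union hdisj measurableSet_Ioi hg_int.integrableOn hg_int.integrableOn,
        Set.Ioc_union_Ioi_eq_Ioi hcc]
    have e1 : ∫ x in Set.Iic (-c), min 1 ((a * x) ^ 2) ∂p
        = ∫ _x in Set.Iic (-c), (1 : ℝ) ∂p := by
      refine setIntegral_congr_fun measurableSet_Iic fun x hx => ?_
      have hx' : x ≤ -c := hx
      have : a * x ≤ -1 := by nlinarith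
      exact min_eq_left (by nlinarith)
    have e2 : ∫ x in Set.Ioc (-c) c, min 1 ((a * x) ^ 2) ∂p
        = ∫ x in Set.Ioc (-c) c, (a * x) ^ 2 ∂p := by
      refine setIntegral_congr_fun measurableSet_Ioc fun x hx => ?_
      obtain ⟨h1, h2⟩ := hx
      have hl : -1 ≤ a * x := by nlinarith
      have hr : a * x ≤ 1 := by nlinarith
      exact min_eq_right (by nlinarith)
    have e3 : ∫ x in Set.Ioi c, min 1 ((a * x) ^ 2) ∂p
        = ∫ _x in Set.Ioi c, (1 : ℝ) ∂p := by
      refine setIntegral_congr_fun measurableSet_Ioi fun x hx => ?_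
      have hx' : c < x := hx
      have : 1 ≤ a * x := by nlinarith
      exact min_eq_left (by nlinarith)
    have e4 : ∫ x in Set.Ioc (-c) c, (a * x) ^ 2 ∂p
        = a ^ 2 * ∫ x in Set.Ioc (-c) c, x ^ 2 ∂p := by
      simp_rw [mul_pow]
      exact integral_const_mul _ _
    have eIcc : ∫ x in Set.Icc (-c) c, x ^ 2 ∂p = ∫ x in Set.Ioc (-c) c, x ^ 2 ∂p :=
      integral_Icc_eq_integral_Ioc
    have eIci : ∫ _x in Set.Ici c, (1 / a : ℝ) ∂p = ∫ _x in Set.Ioi c, (1 / a : ℝ) ∂p :=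
      integral_Ici_eq_integral_Ioi
    rw [split1, split2, e1, e2, e3, e4, eIcc, eIci]
    simp only [setIntegral_const, smul_eq_mul, mul_one]
    have hca' : a * a⁻¹ = 1 := mul_inv_cancel₀ ha0
    linear_combination (-(p.real (Set.Iic (-c)) + p.real (Set.Ioi c)) / 2) * hca'
  · -- final inequality
    apply mul_le_mul_of_nonneg_left _ (by positivity)
    have h_left : (∫ x in Set.Iic (-c), (1 / a : ℝ) ∂p) ≤ ∫ x in Set.Iic (-c), (-x) ∂p := by
      refine setIntegral_mono_on (integrableOn_const (measure_ne_top _ _))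
        hint.neg.integrableOn measurableSet_Iic fun x hx => ?_
      have hx' : x ≤ -c := hx
      show (1 / a : ℝ) ≤ -x
      rw [← hc]; linarith
    have h_right : (∫ x in Set.Ici c, (1 / a : ℝ) ∂p) ≤ ∫ x in Set.Ici c, x ∂p := by
      refine setIntegral_mono_on (integrableOn_const (measure_ne_top _ _))
        hint.integrableOn measurableSet_Ici fun x hx => ?_
      have hx' : c ≤ x := hx
      calc (1 / a : ℝ) = c := rfl
        _ ≤ x := hx'
    exact add_le_add (add_le_add h_left le_rfl) h_right
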